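/- Let A be a γ-approximate ℓ1-oblivious routing for G with lengths ℓ, let P = I − A B^T be the associated cycle projection matrix, and suppose Δ* is a nonzero circulation (B^T Δ* = 0) minimizing g^T Δ / ‖L Δ‖_1. Then there exists an edge e ∈ E such that g^T (Δ*_e · P 1_e) / ‖L (Δ*_e · P 1_e)‖_1 ≤ (1/(1+γ)) · g^T Δ* / ‖L Δ*‖_1. -/

import Mathlib

open Matrix BigOperators

set_option maxHeartbeats 1000000 in
/-- Let `A` be a γ-approximate ℓ1-oblivious routing for `G`, `P = I − A Bᵀ` the cycle
projection matrix, and `Δ` a nonzero circulation minimizing `gᵀΔ/‖LΔ‖₁` (with negative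
optimal value). Then there is an edge `e` with
`gᵀ(Δ_e · P 1_e)/‖L(Δ_e · P 1_e)‖₁ ≤ (1/(1+γ)) · gᵀΔ/‖LΔ‖₁`. -/
theorem stmt_2 {V E : Type*} [Fintype V] [Fintype E] [DecidableEq E]
    (B A : Matrix E V ℝ) (ℓ g : E → ℝ) (hℓ : ∀ e, 0 < ℓ e) (γ : ℝ) (hγ : 0 ≤ γ)
    (hroute : ∀ d : V → ℝ, (∑ v, d v) = 0 → Bᵀ.mulVec (A.mulVec d) = d)
    (hnorm : ∀ x : E → ℝ,
      (∑ e, |(Matrix.diagonal ℓ * A * Bᵀ * Matrix.diagonal (fun e => (ℓ e)⁻¹)).mulVec x e|)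
        ≤ γ * (∑ e, |x e|))
    (Δ : E → ℝ) (hcirc : Bᵀ.mulVec Δ = 0) (hne : Δ ≠ 0)
    (hopt : ∀ Δ' : E → ℝ, Bᵀ.mulVec Δ' = 0 → Δ' ≠ 0 →
      (∑ e, g e * Δ e) / (∑ e, |ℓ e * Δ e|) ≤ (∑ e, g e * Δ' e) / (∑ e, |ℓ e * Δ' e|))
    (hneg : (∑ e, g e * Δ e) / (∑ e, |ℓ e * Δ e|) < 0) :
    ∃ e : E,
      (∑ i, g i * (Δ e * ((1 - A * Bᵀ).mulVec (Pi.single e 1)) i)) /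
          (∑ i, |ℓ i * (Δ e * ((1 - A * Bᵀ).mulVec (Pi.single e 1)) i)|)
        ≤ (1 / (1 + γ)) * ((∑ e, g e * Δ e) / (∑ e, |ℓ e * Δ e|)) := by
  classical
  have hγ1 : (0:ℝ) < 1 + γ := by linarith
  have hMe : ∀ (M : Matrix E E ℝ) (e : E) (c : ℝ) (i : E),
      (M.mulVec (Pi.single e c)) i = M i e * c := by
    intro M e c i
    simp [Matrix.mulVec, dotProduct, Pi.single_apply, mul_ite]
  have hPe : ∀ (e i : E), ((1 - A * Bᵀ).mulVec (Pi.single e 1)) i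
      = (if i = e then (1:ℝ) else 0) - (A * Bᵀ) i e := by
    intro e i
    rw [hMe, mul_one]
    simp [Matrix.sub_apply, Matrix.one_apply]
  -- P Δ = Δ
  have hPΔ : (1 - A * Bᵀ).mulVec Δ = Δ := by
    rw [Matrix.sub_mulVec, Matrix.one_mulVec, ← Matrix.mulVec_mulVec, hcirc,
      Matrix.mulVec_zero, sub_zero]
  have hdecomp : ∀ i, ∑ e, Δ e * ((if i = e then (1:ℝ) else 0) - (A * Bᵀ) i e) = Δ i := by
    intro i
    have h1 : (1 - A * Bᵀ).mulVec Δ i = Δ i := by rw [hPΔ]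
    rw [← h1]
    simp [Matrix.mulVec, dotProduct, Matrix.sub_apply, Matrix.one_apply, sub_mul, mul_comm,
      mul_sub]
  set S : ℝ := ∑ e, g e * Δ e with hS
  set D : ℝ := ∑ e, |ℓ e * Δ e| with hD
  clear_value S D
  have hD0 : 0 < D := by
    rw [hD]
    obtain ⟨e0, he0⟩ := Function.ne_iff.mp hne
    have h1 : 0 < |ℓ e0 * Δ e0| := abs_pos.mpr (mul_ne_zero (hℓ e0).ne' he0)
    have h2 : |ℓ e0 * Δ e0| ≤ ∑ e, |ℓ e * Δ e| :=
      Finset.single_le_sum (f := fun e => |ℓ e * Δ e|) (fun i _ => abs_nonneg _)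
        (Finset.mem_univ e0)
    linarith
  have hS0 : S < 0 := by
    rcases div_neg_iff.mp hneg with ⟨h1, h2⟩ | ⟨h1, h2⟩ <;> linarith
  -- denominator bound per edge
  have hdenb : ∀ e, (∑ i, |ℓ i * (Δ e * ((1 - A * Bᵀ).mulVec (Pi.single e 1)) i)|)
      ≤ (1 + γ) * |ℓ e * Δ e| := by
    intro e
    have hx := hnorm (Pi.single e (Δ e * ℓ e))
    have hxsum : (∑ i, |Pi.single e (Δ e * ℓ e) i|) = |Δ e * ℓ e| := by
      simp [Pi.single_apply, apply_ite (abs), Finset.sum_ite_eq']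
    have hxval : ∀ i, (Matrix.diagonal ℓ * A * Bᵀ * Matrix.diagonal (fun e => (ℓ e)⁻¹)).mulVec
        (Pi.single e (Δ e * ℓ e)) i = ℓ i * (A * Bᵀ) i e * Δ e := by
      intro i
      rw [hMe]
      have hent : (Matrix.diagonal ℓ * A * Bᵀ * Matrix.diagonal fun e => (ℓ e)⁻¹) i e
          = ℓ i * (A * Bᵀ) i e * (ℓ e)⁻¹ := by
        rw [Matrix.mul_assoc (Matrix.diagonal ℓ) A Bᵀ, Matrix.mul_diagonal,
          Matrix.diagonal_mul]
      rw [hent]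
      field_simp [(hℓ e).ne']
    have hx' : (∑ i, |ℓ i * (A * Bᵀ) i e * Δ e|) ≤ γ * |Δ e * ℓ e| := by
      calc (∑ i, |ℓ i * (A * Bᵀ) i e * Δ e|)
          = ∑ i, |(Matrix.diagonal ℓ * A * Bᵀ * Matrix.diagonal (fun e => (ℓ e)⁻¹)).mulVec
              (Pi.single e (Δ e * ℓ e)) i| := by
            refine Finset.sum_congr rfl fun i _ => ?_
            rw [hxval]
        _ ≤ γ * (∑ i, |Pi.single e (Δ e * ℓ e) i|) := hx
        _ = γ * |Δ e * ℓ e| := by rw [hxsum]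
    calc (∑ i, |ℓ i * (Δ e * ((1 - A * Bᵀ).mulVec (Pi.single e 1)) i)|)
        ≤ ∑ i, ((if i = e then |ℓ e * Δ e| else 0) + |ℓ i * (A * Bᵀ) i e * Δ e|) := by
          refine Finset.sum_le_sum fun i _ => ?_
          rw [hPe]
          by_cases h : i = e
          · subst h
            simp only [eq_self_iff_true, if_true]
            rw [show ℓ i * (Δ i * ((1:ℝ) - (A * Bᵀ) i i))
                = ℓ i * Δ i - ℓ i * (A * Bᵀ) i i * Δ i by ring]
            calc |ℓ i * Δ i - ℓ i * (A * Bᵀ) i i * Δ i|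
                ≤ |ℓ i * Δ i| + |ℓ i * (A * Bᵀ) i i * Δ i| := by
                  rw [sub_eq_add_neg]
                  exact (abs_add_le _ _).trans (by rw [abs_neg])
              _ = |ℓ i * Δ i| + |ℓ i * (A * Bᵀ) i i * Δ i| := rfl
          · simp only [if_neg h]
            rw [show ℓ i * (Δ e * ((0:ℝ) - (A * Bᵀ) i e))
                = -(ℓ i * (A * Bᵀ) i e * Δ e) by ring, abs_neg, zero_add]
      _ = |ℓ e * Δ e| + ∑ i, |ℓ i * (A * Bᵀ) i e * Δ e| := by
          rw [Finset.sum_add_distrib]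
          congr 1
          simp
      _ ≤ |ℓ e * Δ e| + γ * |Δ e * ℓ e| := by linarith
      _ = (1 + γ) * |ℓ e * Δ e| := by rw [mul_comm (Δ e) (ℓ e)]; ring
  -- total numerator
  have hsumnum : (∑ e, ∑ i, g i * (Δ e * ((1 - A * Bᵀ).mulVec (Pi.single e 1)) i)) = S := by
    rw [Finset.sum_comm, hS]
    refine Finset.sum_congr rfl fun i _ => ?_
    calc (∑ e, g i * (Δ e * ((1 - A * Bᵀ).mulVec (Pi.single e 1)) i))
        = g i * ∑ e, Δ e * ((if i = e then (1:ℝ) else 0) - (A * Bᵀ) i e) := by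
          rw [Finset.mul_sum]
          refine Finset.sum_congr rfl fun e _ => ?_
          rw [hPe]
      _ = g i * Δ i := by rw [hdecomp]
  set T : ℝ := ∑ e, ∑ i, |ℓ i * (Δ e * ((1 - A * Bᵀ).mulVec (Pi.single e 1)) i)| with hT
  clear_value T
  have hDT : D ≤ T := by
    rw [hD, hT, Finset.sum_comm]
    refine Finset.sum_le_sum fun i _ => ?_
    have hrw : ℓ i * Δ i = ∑ e, ℓ i * (Δ e * ((1 - A * Bᵀ).mulVec (Pi.single e 1)) i) := by
      rw [← Finset.mul_sum]
      congr 1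
      rw [← hdecomp i]
      exact Finset.sum_congr rfl fun e _ => by rw [hPe]
    rw [hrw]
    exact Finset.abs_sum_le_sum_abs _ _
  have hT0 : 0 < T := lt_of_lt_of_le hD0 hDT
  have hTle : T ≤ (1 + γ) * D := by
    rw [hT, hD]
    calc (∑ e, ∑ i, |ℓ i * (Δ e * ((1 - A * Bᵀ).mulVec (Pi.single e 1)) i)|)
        ≤ ∑ e, (1 + γ) * |ℓ e * Δ e| := Finset.sum_le_sum fun e _ => hdenb e
      _ = (1 + γ) * ∑ e, |ℓ e * Δ e| := by rw [Finset.mul_sum]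
  by_contra hcon
  push_neg at hcon
  set c : ℝ := 1 / (1 + γ) * (S / D) with hc
  clear_value c
  have hc0 : c < 0 := by
    rw [hc]
    exact mul_neg_of_pos_of_neg (one_div_pos.mpr hγ1) hneg
  have hkey : ∀ e, c * (∑ i, |ℓ i * (Δ e * ((1 - A * Bᵀ).mulVec (Pi.single e 1)) i)|)
      ≤ ∑ i, g i * (Δ e * ((1 - A * Bᵀ).mulVec (Pi.single e 1)) i) := by
    intro e
    by_cases hd : (∑ i, |ℓ i * (Δ e * ((1 - A * Bᵀ).mulVec (Pi.single e 1)) i)|) = 0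
    · have hz : ∀ i, Δ e * ((1 - A * Bᵀ).mulVec (Pi.single e 1)) i = 0 := by
        intro i
        have h1 := (Finset.sum_eq_zero_iff_of_nonneg (fun i _ => abs_nonneg _)).mp hd i
          (Finset.mem_univ i)
        have h2 : ℓ i * (Δ e * ((1 - A * Bᵀ).mulVec (Pi.single e 1)) i) = 0 := abs_eq_zero.mp h1
        rcases mul_eq_zero.mp h2 with h | h
        · exact absurd h (hℓ i).ne'
        · exact h
      rw [hd, mul_zero]
      apply Finset.sum_nonneg
      intro i _
      rw [hz i, mul_zero]
    · have hd' : 0 < ∑ i, |ℓ i * (Δ e * ((1 - A * Bᵀ).mulVec (Pi.single e 1)) i)| :=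
        lt_of_le_of_ne (Finset.sum_nonneg fun i _ => abs_nonneg _) (Ne.symm hd)
      exact le_of_lt ((lt_div_iff₀ hd').mp (hcon e))
  obtain ⟨e0, _, he0⟩ := Finset.exists_lt_of_sum_lt (f := fun _ : E => (0:ℝ))
    (g := fun e => ∑ i, |ℓ i * (Δ e * ((1 - A * Bᵀ).mulVec (Pi.single e 1)) i)|)
    (by rw [Finset.sum_const_zero, ← hT]; exact hT0)
  have hstrict : c * T < S := by
    rw [hT, ← hsumnum, Finset.mul_sum]
    refine Finset.sum_lt_sum (fun e _ => hkey e) ⟨e0, Finset.mem_univ e0, ?_⟩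
    exact (lt_div_iff₀ he0).mp (hcon e0)
  have hfinal : S ≤ c * T := by
    have h1 : c * ((1 + γ) * D) = S := by
      rw [hc]
      field_simp
    have h2 : c * ((1 + γ) * D) ≤ c * T := mul_le_mul_of_nonpos_left hTle (le_of_lt hc0)
    linarith
  linarith
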